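/- A short exact sequence 0 → ℤ/2 → A → B → 0 of abelian groups splits if and only if the associated homomorphism Tor₂(B) → ℤ/2 (sending b to the unique t with u(t) = 2a for h(a) = b) is the zero homomorphism. -/

import Mathlib

/-- A short exact sequence `0 → ℤ/2 → A → B → 0` splits iff the associated
classifying homomorphism `Tor₂(B) → ℤ/2` is zero, i.e. iff `2a = 0` for every lift `a`
of every 2-torsion element of `B`. -/
theorem stmt2 {A B : Type*} [AddCommGroup A] [AddCommGroup B]
    (u : ZMod 2 →+ A) (h : A →+ B)
    (hu : Function.Injective u) (hh : Function.Surjective h)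
    (hex : u.range = h.ker) :
    (∃ s : B →+ A, ∀ b : B, h (s b) = b) ↔
      (∀ b : B, 2 • b = 0 → ∀ a : A, h a = b → 2 • a = 0) := by
  set x : A := u 1 with hxdef
  have hx2 : x + x = 0 := by
    have h11 : (1 + 1 : ZMod 2) = 0 := rfl
    rw [hxdef, ← map_add, h11, map_zero]
  have hxh : h x = 0 := by
    have : x ∈ h.ker := hex ▸ ⟨1, rfl⟩
    exact this
  have hxne : x ≠ 0 := by
    intro hx0
    exact one_ne_zero (hu (by rw [← hxdef, hx0, map_zero]))
  have hrange : ∀ a : A, a ∈ u.range → a = 0 ∨ a = x := by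
    rintro a ⟨t, rfl⟩
    fin_cases t
    · left; exact map_zero u
    · right; rfl
  constructor
  · rintro ⟨s, hs⟩ b hb a ha
    have : a - s b ∈ h.ker := by
      simp [AddMonoidHom.mem_ker, ha, hs]
    rcases hrange _ (hex ▸ this) with h0 | hx
    · rw [sub_eq_zero] at h0
      rw [h0, ← map_nsmul, hb, map_zero]
    · have hax : a = s b + x := by rw [← hx]; abel
      have key : 2 • a = 2 • s b + (x + x) := by rw [hax, two_nsmul, two_nsmul]; abel
      rw [key, hx2, add_zero, ← map_nsmul, hb, map_zero]
  · intro H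
    -- x ∉ 2A
    have hx2A : ∀ a : A, a + a ≠ x := by
      intro a haa
      have h2a : (2 : ℕ) • a = x := by rw [two_nsmul]; exact haa
      have hb : 2 • h a = 0 := by rw [← map_nsmul, h2a, hxh]
      have := H (h a) hb a rfl
      exact hxne (h2a ▸ this)
    -- Zorn
    set S : Set (AddSubgroup A) := {M | (∀ a : A, a + a ∈ M) ∧ x ∉ M} with hSdef
    have hbase : AddSubgroup.closure {a + a | a : A} ∈ S := by
      constructor
      · intro a; exact AddSubgroup.subset_closure ⟨a, rfl⟩
      · intro hxmem
        -- elements of closure of doubles are doubles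
        have : ∀ y ∈ AddSubgroup.closure {a + a | a : A}, ∃ c : A, c + c = y := by
          intro y hy
          induction hy using AddSubgroup.closure_induction with
          | mem z hz => exact hz
          | zero => exact ⟨0, by simp⟩
          | add p q _ _ hp hq =>
              obtain ⟨c, rfl⟩ := hp; obtain ⟨d, rfl⟩ := hq
              exact ⟨c + d, by abel⟩
          | neg p _ hp => obtain ⟨c, rfl⟩ := hp; exact ⟨-c, by abel⟩
        obtain ⟨c, hc⟩ := this x hxmem
        exact hx2A c hc
    obtain ⟨M, -, hMS, hMmax⟩ := zorn_le_nonempty₀ S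
      (fun c hcS hchain y hy => ⟨sSup c, ⟨fun a => (AddSubgroup.mem_sSup_of_directedOn ⟨y, hy⟩ hchain.directedOn).2 ⟨y, hy, (hcS hy).1 a⟩,
        fun hmem => by
          obtain ⟨z, hz, hxz⟩ := (AddSubgroup.mem_sSup_of_directedOn ⟨y, hy⟩ hchain.directedOn).1 hmem
          exact (hcS hz).2 hxz⟩,
        fun z hz => le_sSup hz⟩) _ hbase
    obtain ⟨hM2, hMx⟩ := hMS
    -- key: every a is in M or a + x in M
    have hcover : ∀ a : A, a ∈ M ∨ a + x ∈ M := by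
      intro a
      by_cases ha : a ∈ M
      · left; exact ha
      · right
        have hlt : M < M ⊔ AddSubgroup.zmultiples a := by
          refine lt_of_le_of_ne le_sup_left ?_
          intro heq
          exact ha (heq ▸ AddSubgroup.mem_sup_right (AddSubgroup.mem_zmultiples a))
        have hxin : x ∈ M ⊔ AddSubgroup.zmultiples a := by
          by_contra hxnot
          exact hlt.ne (le_antisymm hlt.le (hMmax ⟨fun c => AddSubgroup.mem_sup_left (hM2 c), hxnot⟩ hlt.le))
        rw [AddSubgroup.mem_sup] at hxin
        obtain ⟨m, hm, z, hz, hmz⟩ := hxin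
        obtain ⟨k, rfl⟩ := AddSubgroup.mem_zmultiples_iff.1 hz
        -- x = m + k • a
        rcases Int.even_or_odd k with ⟨q, hq⟩ | ⟨q, hq⟩
        · exfalso
          apply hMx
          have hk : k • a = q • a + q • a := by rw [hq, add_smul]
          rw [← hmz, hk]
          exact M.add_mem hm (hM2 (q • a))
        · have hka : k • a = (q • a + q • a) + a := by
            rw [hq, add_smul, one_smul, two_mul, add_smul]
          have hmem2 : q • a + q • a ∈ M := hM2 (q • a)
          -- a = x - m - (q•a+q•a); a + x = x + x - m - (..) = -m - (..)
          have : a + x = -m + -(q • a + q • a) + (x + x) := by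
            rw [← hmz, hka]; abel
          rw [this, hx2, add_zero]
          exact M.add_mem (M.neg_mem hm) (M.neg_mem hmem2)
    -- h restricted to M is bijective
    have hinj : Function.Injective (h.comp M.subtype) := by
      rw [injective_iff_map_eq_zero]
      rintro ⟨a, haM⟩ ha0
      have : a ∈ h.ker := ha0
      rcases hrange a (hex ▸ this) with h0 | hx
      · exact Subtype.ext h0
      · exact absurd (hx ▸ haM) hMx
    have hsurj : Function.Surjective (h.comp M.subtype) := by
      intro b
      obtain ⟨a, rfl⟩ := hh b
      rcases hcover a with haM | haM
      · exact ⟨⟨a, haM⟩, rfl⟩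
      · exact ⟨⟨a + x, haM⟩, by simp [hxh]⟩
    let e := AddEquiv.ofBijective (h.comp M.subtype) ⟨hinj, hsurj⟩
    refine ⟨M.subtype.comp e.symm.toAddMonoidHom, fun b => ?_⟩
    exact e.apply_symm_apply b
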